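/- The number of permutations in S_n avoiding the patterns 2-1-3 and 32-1 equals 2^{n-1}. -/

import Mathlib

/-- `π` contains the classical pattern 2-1-3: indices `i < j < k` with `π j < π i < π k`. -/
def Contains213 {n : ℕ} (π : Equiv.Perm (Fin n)) : Prop :=
  ∃ i j k : Fin n, i < j ∧ j < k ∧ π j < π i ∧ π i < π k

/-- `π` contains the generalized pattern 32-1 (first two positions adjacent). -/
def Contains32'1 {n : ℕ} (π : Equiv.Perm (Fin n)) : Prop :=
  ∃ i i' k : Fin n, (i' : ℕ) = (i : ℕ) + 1 ∧ i' < k ∧ π k < π i' ∧ π i' < π i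

namespace Stmt13Aux

open Equiv Fin

abbrev Good {n : ℕ} (π : Equiv.Perm (Fin n)) : Prop := ¬ Contains213 π ∧ ¬ Contains32'1 π
def P {n : ℕ} (v : Fin (n+1)) (σ : Equiv.Perm (Fin n)) : Equiv.Perm (Fin (n+1)) :=
  ((finSuccEquiv' 0).trans (σ.optionCongr)).trans (finSuccEquiv' v).symm
@[simp] lemma P_zero {n : ℕ} (v : Fin (n+1)) (σ : Equiv.Perm (Fin n)) : P v σ 0 = v := by
  simp [P, finSuccEquiv'_at]
@[simp] lemma P_succ {n : ℕ} (v : Fin (n+1)) (σ : Equiv.Perm (Fin n)) (j : Fin n) :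
    P v σ j.succ = v.succAbove (σ j) := by
  have h : (finSuccEquiv' (0 : Fin (n+1))) j.succ = some j := by
    rw [← Fin.zero_succAbove j, finSuccEquiv'_succAbove]
  simp [P, h, finSuccEquiv'_symm_some]

-- deletion preserves goodness (contrapositive form)
lemma contains213_P {n : ℕ} (v : Fin (n+1)) (σ : Equiv.Perm (Fin n))
    (h : Contains213 σ) : Contains213 (P v σ) := by
  obtain ⟨i, j, k, h1, h2, h3, h4⟩ := h
  refine ⟨i.succ, j.succ, k.succ, Fin.succ_lt_succ_iff.2 h1, Fin.succ_lt_succ_iff.2 h2, ?_, ?_⟩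
  · simpa using (Fin.succAbove_lt_succAbove_iff (p := v)).2 h3
  · simpa using (Fin.succAbove_lt_succAbove_iff (p := v)).2 h4

lemma contains32'1_P {n : ℕ} (v : Fin (n+1)) (σ : Equiv.Perm (Fin n))
    (h : Contains32'1 σ) : Contains32'1 (P v σ) := by
  obtain ⟨i, i', k, h1, h2, h3, h4⟩ := h
  refine ⟨i.succ, i'.succ, k.succ, by simp [Fin.val_succ, h1], Fin.succ_lt_succ_iff.2 h2, ?_, ?_⟩
  · simpa using (Fin.succAbove_lt_succAbove_iff (p := v)).2 h3
  · simpa using (Fin.succAbove_lt_succAbove_iff (p := v)).2 h4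

lemma good_of_P {n : ℕ} {v : Fin (n+1)} {σ : Equiv.Perm (Fin n)}
    (h : Good (P v σ)) : Good σ :=
  ⟨fun hc => h.1 (contains213_P v σ hc), fun hc => h.2 (contains32'1_P v σ hc)⟩

-- inserting 0 preserves goodness
lemma good_P_zero {n : ℕ} {σ : Equiv.Perm (Fin n)} (h : Good σ) : Good (P 0 σ) := by
  constructor
  · rintro ⟨i, j, k, h1, h2, h3, h4⟩
    rcases eq_or_ne i 0 with rfl | hi
    · rw [P_zero] at h3; exact absurd h3 (Fin.not_lt_zero _)
    · have hj : j ≠ 0 := fun hj => by subst hj; exact absurd h1 (Fin.not_lt_zero _)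
      have hk : k ≠ 0 := fun hk => by subst hk; exact absurd h2 (Fin.not_lt_zero _)
      obtain ⟨i, rfl⟩ : ∃ i₀, i₀.succ = i := ⟨i.pred hi, Fin.succ_pred i hi⟩
      obtain ⟨j, rfl⟩ : ∃ j₀, j₀.succ = j := ⟨j.pred hj, Fin.succ_pred j hj⟩
      obtain ⟨k, rfl⟩ : ∃ k₀, k₀.succ = k := ⟨k.pred hk, Fin.succ_pred k hk⟩
      simp only [P_succ, Fin.succAbove_zero] at h3 h4
      exact h.1 ⟨_, _, _, Fin.succ_lt_succ_iff.1 h1, Fin.succ_lt_succ_iff.1 h2,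
        Fin.succ_lt_succ_iff.1 h3, Fin.succ_lt_succ_iff.1 h4⟩
  · rintro ⟨i, i', k, h1, h2, h3, h4⟩
    rcases eq_or_ne i 0 with rfl | hi
    · rw [P_zero] at h4; exact absurd h4 (Fin.not_lt_zero _)
    · have hi' : i' ≠ 0 := fun hh => by rw [hh] at h1; simp at h1
      have hk : k ≠ 0 := fun hk => by subst hk; exact absurd h2 (Fin.not_lt_zero _)
      obtain ⟨i, rfl⟩ : ∃ i₀, i₀.succ = i := ⟨i.pred hi, Fin.succ_pred i hi⟩
      obtain ⟨i', rfl⟩ : ∃ i₀, i₀.succ = i' := ⟨i'.pred hi', Fin.succ_pred i' hi'⟩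
      obtain ⟨k, rfl⟩ : ∃ k₀, k₀.succ = k := ⟨k.pred hk, Fin.succ_pred k hk⟩
      simp only [P_succ, Fin.succAbove_zero, Fin.val_succ] at h1 h3 h4
      exact h.2 ⟨_, _, _, by omega, Fin.succ_lt_succ_iff.1 h2,
        Fin.succ_lt_succ_iff.1 h3, Fin.succ_lt_succ_iff.1 h4⟩


-- inserting at the top, when σ starts with 0
lemma good_P_last {n : ℕ} {σ : Equiv.Perm (Fin (n+1))} (h : Good σ) (h0 : σ 0 = 0) :
    Good (P (Fin.last (n+1)) σ) := by
  constructor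
  · rintro ⟨i, j, k, h1, h2, h3, h4⟩
    rcases eq_or_ne i 0 with rfl | hi
    · have hk : k ≠ 0 := fun hk => by subst hk; exact absurd (h1.trans h2) (Fin.not_lt_zero _)
      obtain ⟨k, rfl⟩ : ∃ k₀, k₀.succ = k := ⟨k.pred hk, Fin.succ_pred k hk⟩
      rw [P_zero, P_succ, Fin.succAbove_last_apply] at h4
      exact absurd h4 (Fin.not_lt.2 (Fin.le_last _))
    · have hj : j ≠ 0 := fun hj => by subst hj; exact absurd h1 (Fin.not_lt_zero _)
      have hk : k ≠ 0 := fun hk => by subst hk; exact absurd h2 (Fin.not_lt_zero _)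
      obtain ⟨i, rfl⟩ : ∃ i₀, i₀.succ = i := ⟨i.pred hi, Fin.succ_pred i hi⟩
      obtain ⟨j, rfl⟩ : ∃ j₀, j₀.succ = j := ⟨j.pred hj, Fin.succ_pred j hj⟩
      obtain ⟨k, rfl⟩ : ∃ k₀, k₀.succ = k := ⟨k.pred hk, Fin.succ_pred k hk⟩
      simp only [P_succ, Fin.succAbove_last_apply, Fin.castSucc_lt_castSucc_iff] at h3 h4
      exact h.1 ⟨_, _, _, Fin.succ_lt_succ_iff.1 h1, Fin.succ_lt_succ_iff.1 h2, h3, h4⟩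
  · rintro ⟨i, i', k, h1, h2, h3, h4⟩
    have hi' : i' ≠ 0 := fun hh => by rw [hh] at h1; simp at h1
    have hk : k ≠ 0 := fun hk => by subst hk; exact absurd h2 (Fin.not_lt_zero _)
    obtain ⟨i', rfl⟩ : ∃ i₀, i₀.succ = i' := ⟨i'.pred hi', Fin.succ_pred i' hi'⟩
    obtain ⟨k, rfl⟩ : ∃ k₀, k₀.succ = k := ⟨k.pred hk, Fin.succ_pred k hk⟩
    rcases eq_or_ne i 0 with rfl | hi
    · -- then i' = 0, so π i'.succ = castSucc (σ 0) = 0, and h3 is impossible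
      have hv : (i' : ℕ) = 0 := by
        simp only [Fin.val_succ, Fin.val_zero] at h1; omega
      have hi0 : i' = 0 := Fin.ext (by simpa using hv)
      subst hi0
      simp only [P_succ, Fin.succAbove_last_apply, h0] at h3
      exact absurd h3 (by simp)
    · obtain ⟨i, rfl⟩ : ∃ i₀, i₀.succ = i := ⟨i.pred hi, Fin.succ_pred i hi⟩
      simp only [P_succ, Fin.succAbove_last_apply, Fin.castSucc_lt_castSucc_iff,
        Fin.val_succ] at h1 h3 h4
      exact h.2 ⟨_, _, _, by omega, Fin.succ_lt_succ_iff.1 h2, h3, h4⟩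

-- inserting just below σ 0, when σ 0 ≠ 0
lemma good_P_mid {n : ℕ} {σ : Equiv.Perm (Fin (n+1))} (h : Good σ) (h0 : σ 0 ≠ 0) :
    Good (P (σ 0).castSucc σ) := by
  constructor
  · rintro ⟨i, j, k, h1, h2, h3, h4⟩
    have hj : j ≠ 0 := fun hj => by subst hj; exact absurd h1 (Fin.not_lt_zero _)
    have hk : k ≠ 0 := fun hk => by subst hk; exact absurd h2 (Fin.not_lt_zero _)
    obtain ⟨j, rfl⟩ : ∃ j₀, j₀.succ = j := ⟨j.pred hj, Fin.succ_pred j hj⟩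
    obtain ⟨k, rfl⟩ : ∃ k₀, k₀.succ = k := ⟨k.pred hk, Fin.succ_pred k hk⟩
    rcases eq_or_ne i 0 with rfl | hi
    · simp only [P_zero, P_succ] at h3 h4
      have hj1 : σ j < σ 0 := by
        have := (Fin.succAbove_lt_iff_castSucc_lt ((σ 0).castSucc) (σ j)).1 h3
        exact Fin.castSucc_lt_castSucc_iff.1 this
      have hk1 : σ 0 ≤ σ k := by
        have := (Fin.lt_succAbove_iff_le_castSucc ((σ 0).castSucc) (σ k)).1 h4
        exact Fin.castSucc_le_castSucc_iff.1 this
      have hj0 : j ≠ 0 := fun hh => by subst hh; exact absurd hj1 (lt_irrefl _)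
      have hk0 : k ≠ 0 := fun hh => by
        subst hh
        exact absurd (Fin.succ_lt_succ_iff.1 h2) (Fin.not_lt_zero _)
      have hk2 : σ 0 < σ k := hk1.lt_of_ne (fun hh => hk0 (σ.injective hh.symm))
      exact h.1 ⟨0, j, k, Fin.pos_of_ne_zero hj0, Fin.succ_lt_succ_iff.1 h2, hj1, hk2⟩
    · obtain ⟨i, rfl⟩ : ∃ i₀, i₀.succ = i := ⟨i.pred hi, Fin.succ_pred i hi⟩
      simp only [P_succ, Fin.succAbove_lt_succAbove_iff] at h3 h4
      exact h.1 ⟨_, _, _, Fin.succ_lt_succ_iff.1 h1, Fin.succ_lt_succ_iff.1 h2, h3, h4⟩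
  · rintro ⟨i, i', k, h1, h2, h3, h4⟩
    have hi' : i' ≠ 0 := fun hh => by rw [hh] at h1; simp at h1
    have hk : k ≠ 0 := fun hk => by subst hk; exact absurd h2 (Fin.not_lt_zero _)
    obtain ⟨i', rfl⟩ : ∃ i₀, i₀.succ = i' := ⟨i'.pred hi', Fin.succ_pred i' hi'⟩
    obtain ⟨k, rfl⟩ : ∃ k₀, k₀.succ = k := ⟨k.pred hk, Fin.succ_pred k hk⟩
    rcases eq_or_ne i 0 with rfl | hi
    · have hv : (i' : ℕ) = 0 := by
        simp only [Fin.val_succ, Fin.val_zero] at h1; omega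
      have hi0 : i' = 0 := Fin.ext (by simpa using hv)
      subst hi0
      simp only [P_zero, P_succ] at h4
      rw [Fin.succAbove_of_le_castSucc _ _ (le_refl _)] at h4
      -- h4 : (σ 0).succ < (σ 0).castSucc, impossible
      have := Fin.lt_iff_val_lt_val.1 h4
      simp only [Fin.val_succ, Fin.coe_castSucc] at this
      omega
    · obtain ⟨i, rfl⟩ : ∃ i₀, i₀.succ = i := ⟨i.pred hi, Fin.succ_pred i hi⟩
      simp only [P_succ, Fin.succAbove_lt_succAbove_iff, Fin.val_succ] at h1 h3 h4
      exact h.2 ⟨_, _, _, by omega, Fin.succ_lt_succ_iff.1 h2, h3, h4⟩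


lemma exists_descent (f : ℕ → ℕ) (b c : ℕ) (hbc : b < c) (hfc : f c < f b) :
    ∃ i, b ≤ i ∧ i < c ∧ f (i+1) < f i := by
  by_contra hno
  push_neg at hno
  have mono : ∀ d, b + d ≤ c → f b ≤ f (b + d) := by
    intro d
    induction d with
    | zero => simp
    | succ d ih =>
      intro hle
      have h1 : b + d < c := by omega
      have h2 := hno (b + d) (by omega) h1
      have h3 := ih (by omega)
      have : b + (d + 1) = (b + d) + 1 := by omega
      rw [this]
      omega
  have := mono (c - b) (by omega)
  rw [show b + (c - b) = c by omega] at this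
  omega

/-- avoiding both patterns implies avoiding 2-4-3-1 -/
lemma no2431 {n : ℕ} (π : Equiv.Perm (Fin n)) (h : Good π) (a b c d : Fin n)
    (hab : a < b) (hbc : b < c) (hcd : c < d)
    (h1 : π d < π a) (h2 : π a < π c) (h3 : π c < π b) : False := by
  set f : ℕ → ℕ := fun i => if hi : i < n then (π ⟨i, hi⟩ : ℕ) else 0 with hf
  have hfb : f b = π b := by simp [hf]
  have hfc : f c = π c := by simp [hf]
  obtain ⟨i, hbi, hic, hdesc⟩ := exists_descent f b c hbc (by
    rw [hfb, hfc]; exact Fin.lt_iff_val_lt_val.1 h3)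
  have hin : i < n := lt_trans hic c.isLt
  have hin' : i + 1 < n := Nat.lt_of_le_of_lt hic c.isLt
  set iF : Fin n := ⟨i, hin⟩ with hiF
  set iF' : Fin n := ⟨i + 1, hin'⟩ with hiF'
  have viF : (iF : ℕ) = i := rfl
  have viF' : (iF' : ℕ) = i + 1 := rfl
  have hdesc' : π iF' < π iF := by
    rw [Fin.lt_iff_val_lt_val]
    have e1 : f i = π iF := by simp [hf, hin]; rfl
    have e2 : f (i+1) = π iF' := by simp [hf, hin']; rfl
    rw [e1, e2] at hdesc
    exact hdesc
  rcases lt_trichotomy (π iF') (π a) with hlt | heq | hgt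
  · -- 2-1-3 at (a, iF', c)
    have hne : iF' ≠ c := by
      intro hh; rw [hh] at hlt; exact absurd (hlt.trans h2) (lt_irrefl _)
    have hltc : iF' < c := lt_of_le_of_ne (by rw [Fin.le_iff_val_le_val]; omega) hne
    have halt : a < iF' := by
      rw [Fin.lt_iff_val_lt_val]
      have : (a : ℕ) < b := Fin.lt_iff_val_lt_val.1 hab
      omega
    exact h.1 ⟨a, iF', c, halt, hltc, hlt, h2⟩
  · exact absurd (π.injective heq) (by
      intro hh
      have : (iF' : ℕ) = a := by rw [hh]
      have hab' : (a : ℕ) < b := Fin.lt_iff_val_lt_val.1 hab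
      omega)
  · -- 32-1 at (iF, iF', d)
    have hd : iF' < d := by
      rw [Fin.lt_iff_val_lt_val]
      have : (c : ℕ) < d := Fin.lt_iff_val_lt_val.1 hcd
      omega
    exact h.2 ⟨iF, iF', d, rfl, hd, h1.trans hgt, hdesc'⟩

/-- the key structure lemma: if π is good and π 0 ≠ 0、then either π 0 is the max and π 1 = 0,
or π 1 = π 0 + 1. -/
lemma crux {n : ℕ} (π : Equiv.Perm (Fin (n+2))) (h : Good π) (hv : π 0 ≠ 0) :
    (π 0 = Fin.last (n+1) ∧ π 1 = 0) ∨ ((π 1 : ℕ) = (π 0 : ℕ) + 1) := by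
  have h01 : (0 : Fin (n+2)) < 1 := by rw [Fin.lt_iff_val_lt_val]; simp
  rcases lt_trichotomy (π 1) (π 0) with hlt | heq | hgt
  · rcases eq_or_ne (π 1) 0 with h10 | h10
    · left
      refine ⟨?_, h10⟩
      by_contra hne
      have hvlast : (π 0 : ℕ) < n + 1 := by
        have := Fin.le_last (π 0)
        rw [Fin.le_iff_val_le_val] at this
        simp at this
        rcases lt_or_eq_of_le this with hh | hh
        · exact hh
        · exact absurd (Fin.ext (by simp [hh]) : π 0 = Fin.last (n+1)) hne
      set u : Fin (n+2) := ⟨(π 0 : ℕ) + 1, by omega⟩ with hu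
      have hu' : (u : ℕ) = (π 0 : ℕ) + 1 := rfl
      set m : Fin (n+2) := π.symm u with hm
      have hmu : π m = u := π.apply_symm_apply u
      have hm0 : m ≠ 0 := by
        intro hh; rw [hh] at hmu
        have := congrArg Fin.val hmu
        rw [hu'] at this
        omega
      have hm1 : m ≠ 1 := by
        intro hh; rw [hh, h10] at hmu
        have := congrArg Fin.val hmu
        rw [hu'] at this
        simp at this
      have h1m : (1 : Fin (n+2)) < m := by
        rw [Fin.lt_iff_val_lt_val]
        have e0 : (m : ℕ) ≠ 0 := fun hh => hm0 (Fin.ext hh)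
        have e1 : (m : ℕ) ≠ 1 := fun hh => hm1 (Fin.ext (by simpa using hh))
        simp
        omega
      refine h.1 ⟨0, 1, m, h01, h1m, ?_, ?_⟩
      · rw [h10]; exact Fin.pos_of_ne_zero hv
      · rw [hmu, Fin.lt_iff_val_lt_val, hu']; omega
    · exfalso
      set k : Fin (n+2) := π.symm 0 with hk
      have hku : π k = 0 := π.apply_symm_apply 0
      have hk0 : k ≠ 0 := by intro hh; rw [hh] at hku; exact hv hku
      have hk1 : k ≠ 1 := by intro hh; rw [hh] at hku; exact h10 hku
      have h1k : (1 : Fin (n+2)) < k := by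
        rw [Fin.lt_iff_val_lt_val]
        have e0 : (k : ℕ) ≠ 0 := fun hh => hk0 (Fin.ext hh)
        have e1 : (k : ℕ) ≠ 1 := fun hh => hk1 (Fin.ext (by simpa using hh))
        simp
        omega
      refine h.2 ⟨0, 1, k, by simp, h1k, ?_, hlt⟩
      rw [hku]
      exact Fin.pos_of_ne_zero h10
  · exact absurd (π.injective heq) (by
      intro hh
      have : (1 : ℕ) = 0 := by
        have := congrArg Fin.val hh
        simpa using this
      omega)
  · rcases eq_or_ne ((π 1 : ℕ)) ((π 0 : ℕ) + 1) with heq1 | hne1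
    · right; exact heq1
    · exfalso
      have hwv : (π 0 : ℕ) + 1 < (π 1 : ℕ) := by
        have := Fin.lt_iff_val_lt_val.1 hgt
        omega
      set u : Fin (n+2) := ⟨(π 0 : ℕ) + 1, by have := (π 1).isLt; omega⟩ with hu
      have hu' : (u : ℕ) = (π 0 : ℕ) + 1 := rfl
      set m : Fin (n+2) := π.symm u with hm
      have hmu : π m = u := π.apply_symm_apply u
      have hm0 : m ≠ 0 := by
        intro hh; rw [hh] at hmu
        have := congrArg Fin.val hmu
        rw [hu'] at this
        omega
      have hm1 : m ≠ 1 := by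
        intro hh; rw [hh] at hmu
        have := congrArg Fin.val hmu
        rw [hu'] at this
        omega
      have h1m : (1 : Fin (n+2)) < m := by
        rw [Fin.lt_iff_val_lt_val]
        have e0 : (m : ℕ) ≠ 0 := fun hh => hm0 (Fin.ext hh)
        have e1 : (m : ℕ) ≠ 1 := fun hh => hm1 (Fin.ext (by simpa using hh))
        simp
        omega
      set k : Fin (n+2) := π.symm 0 with hk
      have hku : π k = 0 := π.apply_symm_apply 0
      have hk0 : k ≠ 0 := by intro hh; rw [hh] at hku; exact hv hku
      have hk1 : k ≠ 1 := by
        intro hh; rw [hh] at hku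
        rw [hku] at hgt
        exact absurd hgt (Fin.not_lt_zero _)
      have hkm : k ≠ m := by
        intro hh; rw [hh, hmu] at hku
        have := congrArg Fin.val hku
        rw [hu'] at this
        simp at this
      have hu0 : π 0 < u := by rw [Fin.lt_iff_val_lt_val, hu']; omega
      rcases lt_or_gt_of_ne hkm with hlt2 | hgt2
      · -- k < m : 2-1-3 at (0, k, m)
        have h0k : (0 : Fin (n+2)) < k := Fin.pos_of_ne_zero hk0
        refine h.1 ⟨0, k, m, h0k, hlt2, ?_, ?_⟩
        · rw [hku]; exact Fin.pos_of_ne_zero hv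
        · rw [hmu]; exact hu0
      · -- m < k : 2431 at (0, 1, m, k)
        refine no2431 π h 0 1 m k h01 h1m hgt2 ?_ ?_ ?_
        · rw [hku]; exact Fin.pos_of_ne_zero hv
        · rw [hmu]; exact hu0
        · rw [hmu, Fin.lt_iff_val_lt_val, hu']; exact hwv


-- exists_P (copied from earlier dev)
lemma exists_P {n : ℕ} (π : Equiv.Perm (Fin (n+1))) : ∃ σ, π = P (π 0) σ := by
  set e : Option (Fin n) ≃ Option (Fin n) :=
    ((finSuccEquiv' (0 : Fin (n+1))).symm.trans (π : Fin (n+1) ≃ Fin (n+1))).trans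
      (finSuccEquiv' (π 0)) with he
  have hnone : e none = none := by simp [he, finSuccEquiv'_at]
  refine ⟨Equiv.removeNone e, ?_⟩
  have hcongr : Equiv.optionCongr (Equiv.removeNone e) = e := by
    ext x
    cases x with
    | none => simp [Equiv.optionCongr, hnone]
    | some a =>
      have hex : ∃ x', e (some a) = some x' := by
        rcases h : e (some a) with _ | b
        · exfalso
          have := e.injective (h.trans hnone.symm)
          simp at this
        · exact ⟨b, rfl⟩
      have := Equiv.removeNone_some e hex
      simp [Equiv.optionCongr, ← this]
  ext x
  simp only [P, hcongr, he]
  simp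

def special {n : ℕ} (σ : Equiv.Perm (Fin (n+1))) : Fin (n+2) :=
  if σ 0 = 0 then Fin.last (n+1) else (σ 0).castSucc

lemma special_ne_zero {n : ℕ} (σ : Equiv.Perm (Fin (n+1))) : special σ ≠ 0 := by
  unfold special
  split_ifs with hh
  · intro hc
    have := congrArg Fin.val hc
    simp [Fin.last] at this
  · intro hc
    exact hh (by simpa using hc)

lemma good_P_special {n : ℕ} {σ : Equiv.Perm (Fin (n+1))} (h : Good σ) :
    Good (P (special σ) σ) := by
  unfold special
  split_ifs with hh
  · exact good_P_last h hh
  · exact good_P_mid h hh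

def F {n : ℕ} (x : Bool × {σ : Equiv.Perm (Fin (n+1)) // Good σ}) :
    {π : Equiv.Perm (Fin (n+2)) // Good π} :=
  ⟨P (if x.1 then special x.2.1 else 0) x.2.1, by
    rcases x with ⟨b, σ, hσ⟩
    cases b
    · simpa using good_P_zero hσ
    · simpa using good_P_special hσ⟩

lemma F_bijective (n : ℕ) : Function.Bijective (F (n := n)) := by
  constructor
  · rintro ⟨b₁, σ₁, h₁⟩ ⟨b₂, σ₂, h₂⟩ h
    have heq : P (if b₁ then special σ₁ else 0) σ₁ = P (if b₂ then special σ₂ else 0) σ₂ :=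
      congrArg Subtype.val h
    have h0 : (if b₁ then special σ₁ else 0) = (if b₂ then special σ₂ else 0) := by
      have := congrFun (congrArg (fun (p : Equiv.Perm (Fin (n+2))) => (p : Fin (n+2) → Fin (n+2))) heq) 0
      simpa using this
    have hb : b₁ = b₂ := by
      cases b₁ <;> cases b₂ <;> simp_all
      · exact (special_ne_zero σ₂ h0.symm).elim
      · exact (special_ne_zero σ₁ h0).elim
    subst hb
    have hσ : σ₁ = σ₂ := by
      apply Equiv.ext
      intro j
      have := congrFun (congrArg (fun (p : Equiv.Perm (Fin (n+2))) => (p : Fin (n+2) → Fin (n+2))) heq) j.succ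
      simp only [P_succ, h0] at this
      exact Fin.succAbove_right_injective this
    subst hσ
    rfl
  · rintro ⟨π, hπ⟩
    obtain ⟨σ, hσeq⟩ := exists_P π
    have hσ : Good σ := good_of_P (hσeq ▸ hπ)
    rcases eq_or_ne (π 0) 0 with h0 | h0
    · refine ⟨(false, ⟨σ, hσ⟩), ?_⟩
      apply Subtype.ext
      simp only [F]
      rw [if_neg (by simp)]
      rw [← h0, ← hσeq]
    · refine ⟨(true, ⟨σ, hσ⟩), ?_⟩
      apply Subtype.ext
      simp only [F]
      have hspec : special σ = π 0 := by
        have h1succ : (1 : Fin (n+2)) = (0 : Fin (n+1)).succ := by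
          rw [Fin.succ_zero_eq_one]
        rcases crux π hπ h0 with ⟨hlast, h1⟩ | hval
        · rw [h1succ, hσeq, P_succ, hlast, Fin.succAbove_last_apply] at h1
          have hσ0 : σ 0 = 0 := by
            have := congrArg Fin.val h1
            simpa using Fin.ext (by simpa using this)
          rw [special, if_pos hσ0, hlast]
        · rw [h1succ] at hval
          rw [hσeq, P_succ] at hval
          have hP0 : P (π 0) σ 0 = π 0 := P_zero _ _
          rcases lt_or_ge ((σ 0).castSucc) (π 0) with hc | hc
          · rw [Fin.succAbove_of_castSucc_lt _ _ hc] at hval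
            have hcv := Fin.lt_iff_val_lt_val.1 hc
            simp only [Fin.coe_castSucc] at hcv hval
            omega
          · rw [Fin.succAbove_of_le_castSucc _ _ hc] at hval
            have hcv : (σ 0 : ℕ) = (π 0 : ℕ) := by
              simp only [Fin.val_succ] at hval
              omega
            have hσ0 : σ 0 ≠ 0 := by
              intro hh
              rw [hh] at hcv
              simp only [Fin.val_zero] at hcv
              exact h0 (Fin.ext (by simp only [Fin.val_zero]; omega))
            rw [special, if_neg hσ0]
            exact Fin.ext (by simpa using hcv)
      rw [if_pos trivial, hspec, ← hσeq]

lemma card_good : ∀ m : ℕ, Nat.card {π : Equiv.Perm (Fin (m+1)) // Good π} = 2 ^ m := by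
  intro m
  induction m with
  | zero =>
    have hgood : ∀ π : Equiv.Perm (Fin 1), Good π := by
      intro π
      constructor
      · rintro ⟨i, j, k, h1, _, _, _⟩
        exact absurd (Subsingleton.elim i j ▸ h1) (lt_irrefl _)
      · rintro ⟨i, i', k, _, h2, _, _⟩
        exact absurd (Subsingleton.elim i' k ▸ h2) (lt_irrefl _)
    haveI : Unique {π : Equiv.Perm (Fin 1) // Good π} :=
      { default := ⟨1, hgood 1⟩
        uniq := by
          rintro ⟨π, _⟩
          apply Subtype.ext
          apply Equiv.ext
          intro x
          exact Subsingleton.elim _ _ }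
    simp [Nat.card_unique]
  | succ m ih =>
    have := Nat.card_eq_of_bijective _ (F_bijective m)
    rw [Nat.card_prod] at this
    rw [← this, ih, Nat.card_eq_fintype_card, Fintype.card_bool, pow_succ]
    ring

end Stmt13Aux

theorem stmt13 (n : ℕ) (hn : 1 ≤ n) :
    Nat.card {π : Equiv.Perm (Fin n) // ¬ Contains213 π ∧ ¬ Contains32'1 π}
      = 2 ^ (n - 1) := by
  obtain ⟨m, rfl⟩ : ∃ m, n = m + 1 := ⟨n - 1, by omega⟩
  simpa using Stmt13Aux.card_good m
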